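/- The only subtractive left ideals of the semiring S = M₂(ℝ⁺) are: {0}, S, E₁ = { [[a,0],[b,0]] }, E₂ = { [[0,c],[0,d]] }, and Nᵣ = { [[ra,a],[rb,b]] } for r ∈ ℝ⁺ \ {0}. Consequently, every strictly ascending (and every strictly descending) chain of subtractive left ideals of S has length at most 3, so S is left k-Noetherian and left k-Artinian. -/
import Mathlib


/-- The 2×2 matrix semiring over the nonnegative reals. -/
abbrev M2 : Type := Matrix (Fin 2) (Fin 2) NNReal

/-- A subset of the semiring is a left ideal. -/
def IsLeftIdeal (I : Set M2) : Prop :=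
  0 ∈ I ∧ (∀ x ∈ I, ∀ y ∈ I, x + y ∈ I) ∧ ∀ s : M2, ∀ x ∈ I, s * x ∈ I

/-- A subset is subtractive: `s + x = y` with `x, y ∈ I` implies `s ∈ I`. -/
def IsSubtractive (I : Set M2) : Prop :=
  ∀ s x y : M2, x ∈ I → y ∈ I → s + x = y → s ∈ I

/-- `E₁ = { [[a,0],[b,0]] : a, b ∈ ℝ⁺ }`. -/
def E1 : Set M2 := {A | A 0 1 = 0 ∧ A 1 1 = 0}

/-- `E₂ = { [[0,c],[0,d]] : c, d ∈ ℝ⁺ }`. -/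
def E2 : Set M2 := {A | A 0 0 = 0 ∧ A 1 0 = 0}

/-- `Nᵣ = { [[ra,a],[rb,b]] : a, b ∈ ℝ⁺ }`. -/
def Nr (r : NNReal) : Set M2 :=
  {A | ∃ a b : NNReal, A 0 0 = r * a ∧ A 0 1 = a ∧ A 1 0 = r * b ∧ A 1 1 = b}




/-- Key step: if W contains (a,b) with b ≠ 0 and (c,d) with a*d < c*b, then W = univ. -/
lemma lmix (W : Set (NNReal × NNReal))
    (hadd : ∀ x ∈ W, ∀ y ∈ W, x + y ∈ W)
    (hsmul : ∀ (t : NNReal), ∀ v ∈ W, ((t * v.1, t * v.2) : NNReal × NNReal) ∈ W)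
    (hsub : ∀ s x y : NNReal × NNReal, x ∈ W → y ∈ W → s + x = y → s ∈ W)
    {a b c d : NNReal} (hab : ((a,b) : NNReal × NNReal) ∈ W) (hb : b ≠ 0)
    (hcd : ((c,d) : NNReal × NNReal) ∈ W) (hlt : a * d < c * b) : W = Set.univ := by
  have hbpos : 0 < b := pos_iff_ne_zero.mpr hb
  have hx : ((d/b * a, d/b * b) : NNReal × NNReal) ∈ W := hsmul (d/b) _ hab
  have hdb : d/b * b = d := div_mul_cancel₀ d hb
  have hlt' : d/b * a < c := by
    rw [div_mul_eq_mul_div, div_lt_iff₀ hbpos, mul_comm d a]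
    exact hlt
  have hle : d/b * a ≤ c := hlt'.le
  have hs : ((c - d/b * a, 0) : NNReal × NNReal) ∈ W := by
    refine hsub _ _ _ hx hcd ?_
    have : (c - d/b * a) + d/b * a = c := tsub_add_cancel_of_le hle
    simp [Prod.ext_iff, this, hdb]
  have he : c - d/b * a ≠ 0 := by
    rw [← pos_iff_ne_zero]
    exact tsub_pos_of_lt hlt'
  have hxaxis : ∀ p : NNReal, ((p, 0) : NNReal × NNReal) ∈ W := by
    intro p
    have := hsmul (p / (c - d/b * a)) _ hs
    simpa [div_mul_cancel₀ _ he] using this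
  have h0b : ((0, b) : NNReal × NNReal) ∈ W := by
    refine hsub _ _ _ (hxaxis a) hab ?_
    simp [Prod.ext_iff]
  have hyaxis : ∀ q : NNReal, ((0, q) : NNReal × NNReal) ∈ W := by
    intro q
    have := hsmul (q / b) _ h0b
    simpa [div_mul_cancel₀ _ hb] using this
  ext v
  simp only [Set.mem_univ, iff_true]
  have := hadd _ (hxaxis v.1) _ (hyaxis v.2)
  simpa using this

lemma lmix' (W : Set (NNReal × NNReal))
    (hadd : ∀ x ∈ W, ∀ y ∈ W, x + y ∈ W)
    (hsmul : ∀ (t : NNReal), ∀ v ∈ W, ((t * v.1, t * v.2) : NNReal × NNReal) ∈ W)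
    (hsub : ∀ s x y : NNReal × NNReal, x ∈ W → y ∈ W → s + x = y → s ∈ W)
    {a b c d : NNReal} (hab : ((a,b) : NNReal × NNReal) ∈ W) (ha : a ≠ 0)
    (hcd : ((c,d) : NNReal × NNReal) ∈ W) (hlt : b * c < d * a) : W = Set.univ := by
  set W' : Set (NNReal × NNReal) := {v | ((v.2, v.1) : NNReal × NNReal) ∈ W} with hW'
  have h := lmix W'
    (fun x hx y hy => hadd _ hx _ hy)
    (fun t v hv => hsmul t _ hv)
    (fun s x y hx hy hxy => hsub (s.2, s.1) (x.2, x.1) (y.2, y.1) hx hy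
      (by rw [Prod.ext_iff] at hxy ⊢; exact ⟨hxy.2, hxy.1⟩))
    (a := b) (b := a) (c := d) (d := c) hab ha hcd hlt
  ext v
  simp only [Set.mem_univ, iff_true]
  have : ((v.2, v.1) : NNReal × NNReal) ∈ W' := h ▸ Set.mem_univ _
  simpa [hW'] using this

lemma classifyW (W : Set (NNReal × NNReal))
    (h0 : ((0,0) : NNReal × NNReal) ∈ W)
    (hadd : ∀ x ∈ W, ∀ y ∈ W, x + y ∈ W)
    (hsmul : ∀ (t : NNReal), ∀ v ∈ W, ((t * v.1, t * v.2) : NNReal × NNReal) ∈ W)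
    (hsub : ∀ s x y : NNReal × NNReal, x ∈ W → y ∈ W → s + x = y → s ∈ W) :
    W = {0} ∨ W = Set.univ ∨ W = {v | v.2 = 0} ∨ W = {v | v.1 = 0} ∨
      ∃ r : NNReal, r ≠ 0 ∧ W = {v | v.1 = r * v.2} := by
  by_cases hW0 : W = {0}
  · exact Or.inl hW0
  have hvex : ∃ v ∈ W, v ≠ 0 := by
    by_contra h
    push_neg at h
    apply hW0
    apply Set.Subset.antisymm
    · intro v hv; exact h v hv
    · intro v hv; simp only [Set.mem_singleton_iff] at hv; subst hv; exact h0
  obtain ⟨⟨a, b⟩, hab, hab0⟩ := hvex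
  by_cases hb : b = 0
  · -- (a, 0) ∈ W, a ≠ 0
    subst hb
    have ha : a ≠ 0 := by simpa [Prod.ext_iff] using hab0
    by_cases hex : ∃ w ∈ W, w.2 ≠ 0
    · obtain ⟨⟨c, d⟩, hcd, hd⟩ := hex
      simp only at hd
      refine Or.inr (Or.inl ?_)
      refine lmix' W hadd hsmul hsub hab ha hcd ?_
      simpa using mul_pos (pos_iff_ne_zero.mpr hd) (pos_iff_ne_zero.mpr ha)
    · push_neg at hex
      refine Or.inr (Or.inr (Or.inl ?_))
      apply Set.Subset.antisymm
      · intro v hv; exact hex v hv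
      · rintro ⟨p, q⟩ hpq
        simp only [Set.mem_setOf_eq] at hpq
        subst hpq
        have := hsmul (p / a) _ hab
        simpa [div_mul_cancel₀ _ ha] using this
  · by_cases ha : a = 0
    · -- (0, b) ∈ W, b ≠ 0
      subst ha
      by_cases hex : ∃ w ∈ W, w.1 ≠ 0
      · obtain ⟨⟨c, d⟩, hcd, hc⟩ := hex
        simp only at hc
        refine Or.inr (Or.inl ?_)
        refine lmix W hadd hsmul hsub hab hb hcd ?_
        simpa using mul_pos (pos_iff_ne_zero.mpr hc) (pos_iff_ne_zero.mpr hb)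
      · push_neg at hex
        refine Or.inr (Or.inr (Or.inr (Or.inl ?_)))
        apply Set.Subset.antisymm
        · intro v hv; exact hex v hv
        · rintro ⟨p, q⟩ hpq
          simp only [Set.mem_setOf_eq] at hpq
          subst hpq
          have := hsmul (q / b) _ hab
          simpa [div_mul_cancel₀ _ hb] using this
    · -- a ≠ 0, b ≠ 0
      set r : NNReal := a / b with hr
      have hrne : r ≠ 0 := div_ne_zero ha hb
      by_cases hex : ∃ w ∈ W, w.1 ≠ r * w.2
      · obtain ⟨⟨c, d⟩, hcd, hcr⟩ := hex
        simp only at hcr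
        refine Or.inr (Or.inl ?_)
        have hne : c * b ≠ a * d := by
          intro h
          apply hcr
          rw [hr, div_mul_eq_mul_div, eq_div_iff hb, h, mul_comm]
        rcases lt_or_gt_of_ne hne with hlt | hgt
        · -- c * b < a * d : use lmix' with (a,b) and (c,d): b*c < d*a
          refine lmix' W hadd hsmul hsub hab ha hcd ?_
          rw [mul_comm b c, mul_comm d a]; exact hlt
        · -- a * d < c * b : use lmix
          exact lmix W hadd hsmul hsub hab hb hcd hgt
      · push_neg at hex
        refine Or.inr (Or.inr (Or.inr (Or.inr ⟨r, hrne, ?_⟩)))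
        apply Set.Subset.antisymm
        · intro v hv; exact hex v hv
        · rintro ⟨p, q⟩ hpq
          simp only [Set.mem_setOf_eq] at hpq
          subst hpq
          have := hsmul (q / b) _ hab
          have h1 : q / b * a = r * q := by
            rw [hr, div_mul_eq_mul_div, mul_comm q a, ← div_mul_eq_mul_div]
          have h2 : q / b * b = q := div_mul_cancel₀ q hb
          simpa [h1, h2] using this

def rowM (p q : NNReal) : M2 := !![p, q; 0, 0]

lemma rowM_apply (p q : NNReal) : rowM p q 0 0 = p ∧ rowM p q 0 1 = q ∧
    rowM p q 1 0 = 0 ∧ rowM p q 1 1 = 0 := by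
  refine ⟨?_, ?_, ?_, ?_⟩ <;> simp [rowM]

lemma rowM_add (p q p' q' : NNReal) :
    rowM (p + p') (q + q') = rowM p q + rowM p' q' := by
  ext i j
  fin_cases i <;> fin_cases j <;> simp [rowM]

lemma rowM_smul (t p q : NNReal) :
    rowM (t * p) (t * q) = (t • (1 : M2)) * rowM p q := by
  rw [smul_mul_assoc, one_mul]
  ext i j
  fin_cases i <;> fin_cases j <;> simp [rowM]

lemma rowM_zero : rowM 0 0 = (0 : M2) := by
  ext i j
  fin_cases i <;> fin_cases j <;> simp [rowM]

lemma row_mul_eq (A : M2) (i : Fin 2) :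
    Matrix.single 0 i 1 * A = rowM (A i 0) (A i 1) := by
  ext j k
  fin_cases j <;> fin_cases k <;>
    simp [Matrix.mul_apply, Fin.sum_univ_two, Matrix.single, rowM]

lemma decompA (A : M2) :
    A = Matrix.single 0 0 1 * rowM (A 0 0) (A 0 1)
      + Matrix.single 1 0 1 * rowM (A 1 0) (A 1 1) := by
  ext j k
  fin_cases j <;> fin_cases k <;>
    simp [Matrix.mul_apply, Fin.sum_univ_two, Matrix.single, rowM]

lemma mem_iff_rows {I : Set M2} (hI : IsLeftIdeal I) (A : M2) :
    A ∈ I ↔ rowM (A 0 0) (A 0 1) ∈ I ∧ rowM (A 1 0) (A 1 1) ∈ I := by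
  constructor
  · intro hA
    exact ⟨row_mul_eq A 0 ▸ hI.2.2 _ _ hA, row_mul_eq A 1 ▸ hI.2.2 _ _ hA⟩
  · rintro ⟨h1, h2⟩
    rw [decompA A]
    exact hI.2.1 _ (hI.2.2 _ _ h1) _ (hI.2.2 _ _ h2)

lemma Nr_iff (r : NNReal) (A : M2) :
    A ∈ Nr r ↔ A 0 0 = r * A 0 1 ∧ A 1 0 = r * A 1 1 := by
  constructor
  · rintro ⟨a, b, h1, h2, h3, h4⟩
    rw [h2, h4]; exact ⟨h1, h3⟩
  · rintro ⟨h1, h2⟩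
    exact ⟨A 0 1, A 1 1, h1, rfl, h2, rfl⟩

def WofI (I : Set M2) : Set (NNReal × NNReal) := {v | rowM v.1 v.2 ∈ I}

lemma classifyI (I : Set M2) (hI : IsLeftIdeal I) (hS : IsSubtractive I) :
    I = {0} ∨ I = Set.univ ∨ I = E1 ∨ I = E2 ∨ ∃ r : NNReal, r ≠ 0 ∧ I = Nr r := by
  have h0 : ((0,0) : NNReal × NNReal) ∈ WofI I := by
    simp only [WofI, Set.mem_setOf_eq, rowM_zero]; exact hI.1
  have hadd : ∀ x ∈ WofI I, ∀ y ∈ WofI I, x + y ∈ WofI I := by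
    intro x hx y hy
    simp only [WofI, Set.mem_setOf_eq, Prod.fst_add, Prod.snd_add, rowM_add]
    exact hI.2.1 _ hx _ hy
  have hsmul : ∀ (t : NNReal), ∀ v ∈ WofI I, ((t * v.1, t * v.2) : NNReal × NNReal) ∈ WofI I := by
    intro t v hv
    simp only [WofI, Set.mem_setOf_eq, rowM_smul]
    exact hI.2.2 _ _ hv
  have hsub : ∀ s x y : NNReal × NNReal, x ∈ WofI I → y ∈ WofI I → s + x = y → s ∈ WofI I := by
    intro s x y hx hy hxy
    rw [Prod.ext_iff] at hxy
    simp only [Prod.fst_add, Prod.snd_add] at hxy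
    refine hS (rowM s.1 s.2) (rowM x.1 x.2) (rowM y.1 y.2) hx hy ?_
    rw [← rowM_add, hxy.1, hxy.2]
  have hmem := mem_iff_rows hI
  have hWmem : ∀ p q : NNReal, (((p, q) : NNReal × NNReal) ∈ WofI I ↔ rowM p q ∈ I) := by
    intro p q; rfl
  rcases classifyW (WofI I) h0 hadd hsmul hsub with h | h | h | h | ⟨r, hr, h⟩
  · left
    ext A
    rw [hmem A]
    constructor
    · rintro ⟨h1, h2⟩
      have e1 : ((A 0 0, A 0 1) : NNReal × NNReal) = 0 := by rw [← Set.mem_singleton_iff, ← h]; exact h1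
      have e2 : ((A 1 0, A 1 1) : NNReal × NNReal) = 0 := by rw [← Set.mem_singleton_iff, ← h]; exact h2
      simp only [Prod.ext_iff, Prod.fst_zero, Prod.snd_zero] at e1 e2
      simp only [Set.mem_singleton_iff]
      ext i j
      fin_cases i <;> fin_cases j <;>
        simp [e1.1, e1.2, e2.1, e2.2]
    · intro hA
      simp only [Set.mem_singleton_iff] at hA
      subst hA
      constructor <;> · simp only [Matrix.zero_apply, rowM_zero]; exact hI.1
  · right; left
    ext A
    simp only [Set.mem_univ, iff_true, hmem A]
    have hall : ∀ p q : NNReal, rowM p q ∈ I := by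
      intro p q
      have : ((p, q) : NNReal × NNReal) ∈ WofI I := h ▸ Set.mem_univ _
      exact this
    exact ⟨hall _ _, hall _ _⟩
  · right; right; left
    ext A
    rw [hmem A]
    have hW : ∀ p q : NNReal, (rowM p q ∈ I ↔ q = 0) := by
      intro p q
      rw [← hWmem, h]
      exact Iff.rfl
    simp only [E1, Set.mem_setOf_eq, hW]
  · right; right; right; left
    ext A
    rw [hmem A]
    have hW : ∀ p q : NNReal, (rowM p q ∈ I ↔ p = 0) := by
      intro p q
      rw [← hWmem, h]
      exact Iff.rfl
    simp only [E2, Set.mem_setOf_eq, hW]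
  · right; right; right; right
    refine ⟨r, hr, ?_⟩
    ext A
    rw [hmem A, Nr_iff]
    have hW : ∀ p q : NNReal, (rowM p q ∈ I ↔ p = r * q) := by
      intro p q
      rw [← hWmem, h]
      exact Iff.rfl
    simp only [hW]

-- witnesses
lemma w1_mem_E1 : (!![1, 0; 0, 0] : M2) ∈ E1 := by simp [E1]
lemma w1_not_E2 : (!![1, 0; 0, 0] : M2) ∉ E2 := by simp [E2]
lemma w1_not_Nr (r : NNReal) : (!![1, 0; 0, 0] : M2) ∉ Nr r := by simp [Nr_iff]
lemma w2_mem_E2 : (!![0, 1; 0, 0] : M2) ∈ E2 := by simp [E2]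
lemma w2_not_E1 : (!![0, 1; 0, 0] : M2) ∉ E1 := by simp [E1]
lemma w2_not_Nr {r : NNReal} (hr : r ≠ 0) : (!![0, 1; 0, 0] : M2) ∉ Nr r := by
  simp [Nr_iff, eq_comm, hr]
lemma w3_mem_Nr (r : NNReal) : (!![r, 1; 0, 0] : M2) ∈ Nr r := by simp [Nr_iff]
lemma w3_not_E1 (r : NNReal) : (!![r, 1; 0, 0] : M2) ∉ E1 := by simp [E1]
lemma w3_not_E2 {r : NNReal} (hr : r ≠ 0) : (!![r, 1; 0, 0] : M2) ∉ E2 := by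
  simp [E2, hr]
lemma w3_Nr_eq {r r' : NNReal} (h : (!![r, 1; 0, 0] : M2) ∈ Nr r') : r = r' := by
  rw [Nr_iff] at h
  simpa using h.1

lemma mid_subset_eq {I J : Set M2}
    (hI : I = E1 ∨ I = E2 ∨ ∃ r : NNReal, r ≠ 0 ∧ I = Nr r)
    (hJ : J = E1 ∨ J = E2 ∨ ∃ r : NNReal, r ≠ 0 ∧ J = Nr r)
    (hIJ : I ⊆ J) : I = J := by
  rcases hI with rfl | rfl | ⟨r, hr, rfl⟩ <;>
    rcases hJ with rfl | rfl | ⟨r', hr', rfl⟩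
  · rfl
  · exact absurd (hIJ w1_mem_E1) w1_not_E2
  · exact absurd (hIJ w1_mem_E1) (w1_not_Nr r')
  · exact absurd (hIJ w2_mem_E2) w2_not_E1
  · rfl
  · exact absurd (hIJ w2_mem_E2) (w2_not_Nr hr')
  · exact absurd (hIJ (w3_mem_Nr r)) (w3_not_E1 r)
  · exact absurd (hIJ (w3_mem_Nr r)) (w3_not_E2 hr)
  · rw [w3_Nr_eq (hIJ (w3_mem_Nr r))]

lemma not_ssubset_zero {I : Set M2} (hI : IsLeftIdeal I) : ¬ (I ⊂ ({0} : Set M2)) := by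
  intro h
  exact h.ne (Set.Subset.antisymm h.subset (Set.singleton_subset_iff.mpr hI.1))

lemma no_chain4 (I₁ I₂ I₃ I₄ : Set M2)
    (h1 : IsLeftIdeal I₁) (s1 : IsSubtractive I₁) (h2 : IsLeftIdeal I₂) (s2 : IsSubtractive I₂)
    (h3 : IsLeftIdeal I₃) (s3 : IsSubtractive I₃) (h4 : IsLeftIdeal I₄) (s4 : IsSubtractive I₄) :
    ¬(I₁ ⊂ I₂ ∧ I₂ ⊂ I₃ ∧ I₃ ⊂ I₄) := by
  rintro ⟨h12, h23, h34⟩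
  have hmid2 : I₂ = E1 ∨ I₂ = E2 ∨ ∃ r : NNReal, r ≠ 0 ∧ I₂ = Nr r := by
    rcases classifyI I₂ h2 s2 with h | h | h | h | h
    · exact absurd (h ▸ h12) (not_ssubset_zero h1)
    · exact absurd (Set.Subset.antisymm (h ▸ h23).subset (Set.subset_univ _)).symm
        (h ▸ h23).ne.symm
    · exact Or.inl h
    · exact Or.inr (Or.inl h)
    · exact Or.inr (Or.inr h)
  have hmid3 : I₃ = E1 ∨ I₃ = E2 ∨ ∃ r : NNReal, r ≠ 0 ∧ I₃ = Nr r := by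
    rcases classifyI I₃ h3 s3 with h | h | h | h | h
    · exact absurd (h ▸ h23) (not_ssubset_zero h2)
    · exact absurd (Set.Subset.antisymm (h ▸ h34).subset (Set.subset_univ _)).symm
        (h ▸ h34).ne.symm
    · exact Or.inl h
    · exact Or.inr (Or.inl h)
    · exact Or.inr (Or.inr h)
  exact h23.ne (mid_subset_eq hmid2 hmid3 h23.subset)


/-- the only subtractive left ideals of `S = M₂(ℝ⁺)` are `{0}`, `S`,
`E₁`, `E₂` and the `Nᵣ` (`r ≠ 0`); consequently every strictly ascending chain of
subtractive left ideals has length at most 3 (there is no chain `I₁ ⊊ I₂ ⊊ I₃ ⊊ I₄`),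
i.e. `S` is left `k`-Noetherian and left `k`-Artinian. -/
theorem stmt_11 :
    (∀ I : Set M2, IsLeftIdeal I → IsSubtractive I →
      I = {0} ∨ I = Set.univ ∨ I = E1 ∨ I = E2 ∨ ∃ r : NNReal, r ≠ 0 ∧ I = Nr r) ∧
    (∀ I₁ I₂ I₃ I₄ : Set M2,
      IsLeftIdeal I₁ → IsSubtractive I₁ → IsLeftIdeal I₂ → IsSubtractive I₂ →
      IsLeftIdeal I₃ → IsSubtractive I₃ → IsLeftIdeal I₄ → IsSubtractive I₄ →
      ¬(I₁ ⊂ I₂ ∧ I₂ ⊂ I₃ ∧ I₃ ⊂ I₄)) ∧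
    (∀ f : ℕ → Set M2, (∀ n, IsLeftIdeal (f n) ∧ IsSubtractive (f n)) → Monotone f →
      ∃ n, ∀ m, n ≤ m → f m = f n) ∧
    (∀ f : ℕ → Set M2, (∀ n, IsLeftIdeal (f n) ∧ IsSubtractive (f n)) → Antitone f →
      ∃ n, ∀ m, n ≤ m → f m = f n) := by
  refine ⟨classifyI, ?_, ?_, ?_⟩
  · intro I₁ I₂ I₃ I₄ h1 s1 h2 s2 h3 s3 h4 s4
    exact no_chain4 I₁ I₂ I₃ I₄ h1 s1 h2 s2 h3 s3 h4 s4
  · intro f hf hmono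
    by_contra h
    push_neg at h
    obtain ⟨m1, hm1, hne1⟩ := h 0
    obtain ⟨m2, hm2, hne2⟩ := h m1
    obtain ⟨m3, hm3, hne3⟩ := h m2
    refine no_chain4 (f 0) (f m1) (f m2) (f m3)
      (hf 0).1 (hf 0).2 (hf m1).1 (hf m1).2 (hf m2).1 (hf m2).2 (hf m3).1 (hf m3).2
      ⟨?_, ?_, ?_⟩
    · exact lt_of_le_of_ne (hmono hm1) (Ne.symm hne1)
    · exact lt_of_le_of_ne (hmono hm2) (Ne.symm hne2)
    · exact lt_of_le_of_ne (hmono hm3) (Ne.symm hne3)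
  · intro f hf hanti
    by_contra h
    push_neg at h
    obtain ⟨m1, hm1, hne1⟩ := h 0
    obtain ⟨m2, hm2, hne2⟩ := h m1
    obtain ⟨m3, hm3, hne3⟩ := h m2
    refine no_chain4 (f m3) (f m2) (f m1) (f 0)
      (hf m3).1 (hf m3).2 (hf m2).1 (hf m2).2 (hf m1).1 (hf m1).2 (hf 0).1 (hf 0).2
      ⟨?_, ?_, ?_⟩
    · exact lt_of_le_of_ne (hanti hm3) hne3
    · exact lt_of_le_of_ne (hanti hm2) hne2
    · exact lt_of_le_of_ne (hanti hm1) hne1
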